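/- arXiv:1712.06645 — 3 statements merged into one kernel-verified Lean document; each statement's English description precedes it below -/
import Mathlib

section
/- The cardinality of the hyperbolic cross Λ_s^HC = { n ∈ ℕ₀^d : ∏_{k=1}^d (n_k+1) ≤ s+1 } satisfies |Λ_s^HC| ≤ 2 s³ 4^d for all integers s ≥ 1 and d ≥ 1. -/
open Finset

private def T (d N : ℕ) : Finset (Fin d → ℕ) :=
  (Fintype.piFinset fun _ => Finset.range N).filter (fun n => ∏ k, (n k + 1) ≤ N)

private lemma mem_T {d N : ℕ} {n : Fin d → ℕ} :
    n ∈ T d N ↔ ∏ k, (n k + 1) ≤ N := by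
  constructor
  · intro h; exact (Finset.mem_filter.mp h).2
  · intro h
    refine Finset.mem_filter.mpr ⟨?_, h⟩
    refine Fintype.mem_piFinset.mpr fun k => Finset.mem_range.mpr ?_
    have hk : n k + 1 ≤ ∏ j, (n j + 1) :=
      Finset.single_le_prod' (f := fun j => n j + 1)
        (fun j _ => Nat.succ_le_succ (Nat.zero_le _)) (Finset.mem_univ k)
    omega

private lemma sum_inv_sq (N : ℕ) :
    ∑ j ∈ Finset.range N, (1 : ℚ) / ((j : ℚ) + 1) ^ 2 ≤ 2 - 2 / ((N : ℚ) + 1) := by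
  induction N with
  | zero => norm_num
  | succ N ih =>
    rw [Finset.sum_range_succ]
    have h1 : (0:ℚ) < (N:ℚ) + 1 := by positivity
    have h2 : (0:ℚ) < (N:ℚ) + 2 := by positivity
    have key2 : (1:ℚ) / ((N:ℚ) + 1) ^ 2 ≤ 2 / ((N:ℚ) + 1) - 2 / ((N:ℚ) + 1 + 1) := by
      rw [div_sub_div _ _ (by positivity) (by positivity),
        div_le_div_iff₀ (by positivity) (by positivity)]
      nlinarith [sq_nonneg ((N:ℚ))]
    push_cast
    linarith [ih]

private lemma sum_div_cube (N : ℕ) :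
    ∑ j ∈ Finset.range N, (N / (j + 1)) ^ 3 ≤ 2 * N ^ 3 := by
  have h : ((∑ j ∈ Finset.range N, (N / (j + 1)) ^ 3 : ℕ) : ℚ) ≤ 2 * (N : ℚ) ^ 3 := by
    rw [Nat.cast_sum]
    have hstep : ∀ j ∈ Finset.range N,
        (((N / (j + 1)) ^ 3 : ℕ) : ℚ) ≤ (N : ℚ) ^ 3 * (1 / ((j : ℚ) + 1) ^ 2) := by
      intro j _
      have hpos : (0:ℚ) < (j : ℚ) + 1 := by positivity
      have hd : ((N / (j + 1) : ℕ) : ℚ) ≤ (N : ℚ) / ((j : ℚ) + 1) := by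
        have h' := Nat.cast_div_le (α := ℚ) (m := N) (n := j + 1)
        push_cast at h'
        exact h'
      have h3 : (((N / (j + 1) : ℕ)) : ℚ) ^ 3 ≤ ((N : ℚ) / ((j : ℚ) + 1)) ^ 3 :=
        pow_le_pow_left₀ (by positivity) hd 3
      have h4 : ((N : ℚ) / ((j : ℚ) + 1)) ^ 3 ≤ (N : ℚ) ^ 3 * (1 / ((j : ℚ) + 1) ^ 2) := by
        have hj1 : ((j:ℚ) + 1) ^ 2 ≤ ((j:ℚ) + 1) ^ 3 := by
          have h1j : (1:ℚ) ≤ (j:ℚ) + 1 := by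
            have := Nat.cast_nonneg (α := ℚ) j
            linarith
          exact pow_le_pow_right₀ h1j (by norm_num)
        have hN3 : (0:ℚ) ≤ (N:ℚ)^3 := by positivity
        calc ((N:ℚ) / ((j:ℚ)+1)) ^ 3 = (N:ℚ)^3 / ((j:ℚ)+1)^3 := by rw [div_pow]
          _ ≤ (N:ℚ)^3 / ((j:ℚ)+1)^2 :=
              div_le_div_of_nonneg_left hN3 (by positivity) hj1
          _ = (N:ℚ)^3 * (1 / ((j:ℚ)+1)^2) := by ring
      push_cast at h3 ⊢
      linarith
    calc ∑ j ∈ Finset.range N, (((N / (j + 1)) ^ 3 : ℕ) : ℚ)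
        ≤ ∑ j ∈ Finset.range N, (N : ℚ) ^ 3 * (1 / ((j : ℚ) + 1) ^ 2) :=
          Finset.sum_le_sum hstep
      _ = (N : ℚ) ^ 3 * ∑ j ∈ Finset.range N, (1 : ℚ) / ((j : ℚ) + 1) ^ 2 := by
          rw [Finset.mul_sum]
      _ ≤ (N : ℚ) ^ 3 * 2 := by
          have h0 : (0:ℚ) ≤ (N:ℚ)^3 := by positivity
          have h1 := sum_inv_sq N
          have h2 : (0:ℚ) < 2 / ((N:ℚ)+1) := by positivity
          nlinarith
      _ = 2 * (N : ℚ) ^ 3 := by ring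
  exact_mod_cast h

private lemma T_card_rec (d N : ℕ) :
    (T (d + 1) N).card ≤ ∑ j ∈ Finset.range N, (T d (N / (j + 1))).card := by
  rw [← Finset.card_sigma]
  apply Finset.card_le_card_of_injOn
    (fun n => (⟨n (Fin.last d), Fin.init n⟩ : Σ _ : ℕ, Fin d → ℕ))
  · intro n hn
    rw [Finset.mem_coe] at hn ⊢; rw [mem_T] at hn
    have hprod : ∏ k : Fin (d+1), (n k + 1)
        = (∏ k : Fin d, (Fin.init n k + 1)) * (n (Fin.last d) + 1) := by
      rw [Fin.prod_univ_castSucc]; rfl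
    have hlast : n (Fin.last d) + 1 ≤ N := by
      have h := Finset.single_le_prod' (f := fun k => n k + 1)
        (fun j _ => Nat.succ_le_succ (Nat.zero_le _)) (Finset.mem_univ (Fin.last d))
      replace h : n (Fin.last d) + 1 ≤ ∏ k, (n k + 1) := h
      omega
    refine Finset.mem_sigma.mpr
      ⟨Finset.mem_range.mpr (show n (Fin.last d) < N by omega), mem_T.mpr ?_⟩
    show ∏ k : Fin d, (Fin.init n k + 1) ≤ N / (n (Fin.last d) + 1)
    rw [Nat.le_div_iff_mul_le (Nat.succ_pos _)]
    rw [← hprod]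
    exact hn
  · intro a _ b _ hab
    obtain ⟨h1, h2⟩ := Sigma.mk.inj_iff.mp hab
    have h2' : Fin.init a = Fin.init b := eq_of_heq h2
    rw [← Fin.snoc_init_self a, ← Fin.snoc_init_self b, h1, h2']

private lemma T_card_le (d N : ℕ) : (T (d + 1) N).card ≤ 2 ^ d * N ^ 3 := by
  induction d generalizing N with
  | zero =>
    calc (T 1 N).card ≤ (Fintype.piFinset fun _ : Fin 1 => Finset.range N).card :=
          Finset.card_filter_le _ _
      _ = N := by simp
      _ ≤ N ^ 3 := Nat.le_self_pow (by norm_num) N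
      _ = 2 ^ 0 * N ^ 3 := by ring
  | succ d ih =>
    calc (T (d + 2) N).card ≤ ∑ j ∈ Finset.range N, (T (d + 1) (N / (j + 1))).card :=
          T_card_rec _ _
      _ ≤ ∑ j ∈ Finset.range N, 2 ^ d * (N / (j + 1)) ^ 3 :=
          Finset.sum_le_sum fun j _ => ih _
      _ = 2 ^ d * ∑ j ∈ Finset.range N, (N / (j + 1)) ^ 3 := by rw [Finset.mul_sum]
      _ ≤ 2 ^ d * (2 * N ^ 3) := Nat.mul_le_mul_left _ (sum_div_cube N)
      _ = 2 ^ (d + 1) * N ^ 3 := by ring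

/-- The cardinality of the hyperbolic cross
`Λ_s^HC = { n ∈ ℕ₀^d : ∏_{k=1}^d (n_k+1) ≤ s+1 }` is at most `2 s³ 4^d`. -/
theorem stmt3 (d s : ℕ) (hd : 1 ≤ d) (hs : 1 ≤ s) :
    Set.ncard {n : Fin d → ℕ | ∏ k, (n k + 1) ≤ s + 1} ≤ 2 * s ^ 3 * 4 ^ d := by
  obtain ⟨e, rfl⟩ : ∃ e, d = e + 1 := ⟨d - 1, by omega⟩
  have hset : {n : Fin (e + 1) → ℕ | ∏ k, (n k + 1) ≤ s + 1} = ↑(T (e + 1) (s + 1)) := by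
    ext n
    simp only [Set.mem_setOf_eq, Finset.coe_filter, mem_T, Finset.mem_coe]
  rw [hset, Set.ncard_coe_finset]
  calc (T (e + 1) (s + 1)).card ≤ 2 ^ e * (s + 1) ^ 3 := T_card_le _ _
    _ ≤ 2 ^ e * (2 * s) ^ 3 :=
        Nat.mul_le_mul_left _ (Nat.pow_le_pow_left (by omega) 3)
    _ = 8 * 2 ^ e * s ^ 3 := by ring
    _ ≤ 8 * 4 ^ e * s ^ 3 :=
        Nat.mul_le_mul_right _ (Nat.mul_le_mul_left 8 (Nat.pow_le_pow_left (by norm_num) e))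
    _ = 2 * s ^ 3 * 4 ^ (e + 1) := by ring
end

section
/- For the tensor-product Sturm–Liouville eigenfunctions, if κ_n = u_n⁻² sup_y (χ(y)/μ(y))|φ_n'(y)|² in one dimension and κ_n = Σ_k κ_{n_k} for multi-indices, then for all y ∈ D and n ∈ ℕ₀^d: Σ_{k=0}^d τ_k(y) |∂_k φ_n(y)|² ≤ u_n² (1 + κ_n), where u_n = ∏_k u_{n_k} are the tensorized intrinsic weights. -/
/-- Tensorized coherence bound: if in one dimension
`(ν/μ)|φ_n|² ≤ u_n²` and `(χ/μ)|φ_n'|² ≤ κ_n u_n²` on `(-1,1)`, then for tensor-product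
eigenfunctions, for all `y ∈ D = (-1,1)^d` and multi-indices `n`,
`Σ_{k=0}^d τ_k(y)|∂_k φ_n(y)|² ≤ u_n²(1+κ_n)` with `u_n = ∏_k u_{n_k}` and
`κ_n = Σ_k κ_{n_k}`. -/
theorem stmt11 (d : ℕ) (χ ν μ : ℝ → ℝ) (φ1 Dφ1 : ℕ → ℝ → ℂ) (u1 κ1 : ℕ → ℝ)
    (hμ : ∀ y ∈ Set.Ioo (-1 : ℝ) 1, 0 < μ y) (hν : ∀ y ∈ Set.Ioo (-1 : ℝ) 1, 0 ≤ ν y)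
    (hχ : ∀ y ∈ Set.Ioo (-1 : ℝ) 1, 0 ≤ χ y)
    (hu1pos : ∀ n, 0 ≤ u1 n) (hκ1pos : ∀ n, 0 ≤ κ1 n)
    (hu1 : ∀ n, ∀ y ∈ Set.Ioo (-1 : ℝ) 1, ν y / μ y * ‖φ1 n y‖ ^ 2 ≤ u1 n ^ 2)
    (hκ1 : ∀ n, ∀ y ∈ Set.Ioo (-1 : ℝ) 1,
      χ y / μ y * ‖Dφ1 n y‖ ^ 2 ≤ κ1 n * u1 n ^ 2)
    (n : Fin d → ℕ) (y : Fin d → ℝ) (hy : ∀ j, y j ∈ Set.Ioo (-1 : ℝ) 1) :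
    ((∏ j, ν (y j)) / ∏ j, μ (y j)) * ‖∏ j, φ1 (n j) (y j)‖ ^ 2
      + (∑ k, ((χ (y k) * ∏ j ∈ Finset.univ.erase k, ν (y j)) / ∏ j, μ (y j)) *
          ‖Dφ1 (n k) (y k) * ∏ j ∈ Finset.univ.erase k, φ1 (n j) (y j)‖ ^ 2)
      ≤ (∏ j, u1 (n j)) ^ 2 * (1 + ∑ k, κ1 (n k)) := by
  set a : Fin d → ℝ := fun j => ν (y j) / μ (y j) * ‖φ1 (n j) (y j)‖ ^ 2 with ha
  have hμne : ∀ j, μ (y j) ≠ 0 := fun j => (hμ _ (hy j)).ne'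
  have ha_nonneg : ∀ j, 0 ≤ a j := fun j =>
    mul_nonneg (div_nonneg (hν _ (hy j)) (hμ _ (hy j)).le) (by positivity)
  have ha_le : ∀ j, a j ≤ u1 (n j) ^ 2 := fun j => hu1 _ _ (hy j)
  have h0 : ((∏ j, ν (y j)) / ∏ j, μ (y j)) * ‖∏ j, φ1 (n j) (y j)‖ ^ 2
      = ∏ j, a j := by
    rw [ha, Finset.prod_mul_distrib, Finset.prod_div_distrib, norm_prod, ← Finset.prod_pow]
  have hk : ∀ k : Fin d, ((χ (y k) * ∏ j ∈ Finset.univ.erase k, ν (y j)) / ∏ j, μ (y j)) *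
        ‖Dφ1 (n k) (y k) * ∏ j ∈ Finset.univ.erase k, φ1 (n j) (y j)‖ ^ 2
      = (χ (y k) / μ (y k) * ‖Dφ1 (n k) (y k)‖ ^ 2) *
        ∏ j ∈ Finset.univ.erase k, a j := by
    intro k
    rw [ha, norm_mul, norm_prod, mul_pow, ← Finset.prod_pow, Finset.prod_mul_distrib,
      Finset.prod_div_distrib,
      ← Finset.mul_prod_erase Finset.univ (fun j => μ (y j)) (Finset.mem_univ k)]
    have h1 : ∏ j ∈ Finset.univ.erase k, μ (y j) ≠ 0 :=
      Finset.prod_ne_zero_iff.mpr fun j _ => hμne j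
    field_simp
  have hkb : ∀ k : Fin d, (χ (y k) / μ (y k) * ‖Dφ1 (n k) (y k)‖ ^ 2) *
        ∏ j ∈ Finset.univ.erase k, a j
      ≤ κ1 (n k) * ∏ j, u1 (n j) ^ 2 := by
    intro k
    have h2 : ∏ j ∈ Finset.univ.erase k, a j ≤ ∏ j ∈ Finset.univ.erase k, u1 (n j) ^ 2 :=
      Finset.prod_le_prod (fun j _ => ha_nonneg j) (fun j _ => ha_le j)
    calc (χ (y k) / μ (y k) * ‖Dφ1 (n k) (y k)‖ ^ 2) *
          ∏ j ∈ Finset.univ.erase k, a j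
        ≤ (κ1 (n k) * u1 (n k) ^ 2) * ∏ j ∈ Finset.univ.erase k, u1 (n j) ^ 2 := by
          apply mul_le_mul (hκ1 _ _ (hy k)) h2
            (Finset.prod_nonneg fun j _ => ha_nonneg j)
            (mul_nonneg (hκ1pos _) (by positivity))
      _ = κ1 (n k) * ∏ j, u1 (n j) ^ 2 := by
          rw [← Finset.mul_prod_erase Finset.univ (fun j => u1 (n j) ^ 2)
            (Finset.mem_univ k)]
          ring
  calc ((∏ j, ν (y j)) / ∏ j, μ (y j)) * ‖∏ j, φ1 (n j) (y j)‖ ^ 2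
      + (∑ k, ((χ (y k) * ∏ j ∈ Finset.univ.erase k, ν (y j)) / ∏ j, μ (y j)) *
          ‖Dφ1 (n k) (y k) * ∏ j ∈ Finset.univ.erase k, φ1 (n j) (y j)‖ ^ 2)
      = (∏ j, a j) + ∑ k, (χ (y k) / μ (y k) * ‖Dφ1 (n k) (y k)‖ ^ 2) *
          ∏ j ∈ Finset.univ.erase k, a j := by
        rw [h0]; exact congrArg _ (Finset.sum_congr rfl fun k _ => hk k)
    _ ≤ (∏ j, u1 (n j) ^ 2) + ∑ k, κ1 (n k) * ∏ j, u1 (n j) ^ 2 :=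
        add_le_add (Finset.prod_le_prod (fun j _ => ha_nonneg j) (fun j _ => ha_le j))
          (Finset.sum_le_sum fun k _ => hkb k)
    _ = (∏ j, u1 (n j)) ^ 2 * (1 + ∑ k, κ1 (n k)) := by
        rw [← Finset.prod_pow, mul_add, mul_one, Finset.mul_sum]
        congr 1
        exact Finset.sum_congr rfl fun k _ => by ring
end

section
/- For Jacobi polynomials P_n^{(α,β)} with α, β ≥ -1/2, there exists a constant C depending only on α and β such that sup_{y∈(-1,1)} √(1-y²) |(P_n^{(α,β)})'(y)| ≤ C n^{1+q} for all n ≥ 1, where q = max{α, β}. -/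
/-- Generalized binomial coefficient `binom(a, k)` for real `a`. -/
noncomputable def genBinom (a : ℝ) (k : ℕ) : ℝ :=
  (∏ i ∈ Finset.range k, (a - i)) / Nat.factorial k

/-- The Jacobi polynomial `P_n^{(α,β)}`, normalized by `P_n^{(α,β)}(1) = binom(n+α, n)`,
via the explicit hypergeometric sum. -/
noncomputable def jacobiP (α β : ℝ) (n : ℕ) (x : ℝ) : ℝ :=
  ∑ k ∈ Finset.range (n + 1),
    genBinom (n + α) (n - k) * genBinom (n + β) k * ((x - 1) / 2) ^ k * ((x + 1) / 2) ^ (n - k)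


open Finset

lemma genBinom_zero (a : ℝ) : genBinom a 0 = 1 := by simp [genBinom]

lemma genBinom_succ_left (a : ℝ) (k : ℕ) :
    ((k : ℝ) + 1) * genBinom a (k + 1) = a * genBinom (a - 1) k := by
  have h : ∏ i ∈ range (k + 1), (a - i) = (∏ i ∈ range k, (a - 1 - i)) * a := by
    rw [prod_range_succ']
    congr 1
    · apply prod_congr rfl; intro i _; push_cast; ring
    · simp
  rw [genBinom, genBinom, h, Nat.factorial_succ]
  have h2 : ((k + 1) * k.factorial : ℕ) ≠ 0 := by positivity
  have h3 : (k.factorial : ℝ) ≠ 0 := by exact_mod_cast Nat.factorial_ne_zero k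
  push_cast
  field_simp

lemma genBinom_succ_right (a : ℝ) (k : ℕ) :
    ((k : ℝ) + 1) * genBinom a (k + 1) = (a - k) * genBinom a k := by
  rw [genBinom, genBinom, prod_range_succ, Nat.factorial_succ]
  have h3 : (k.factorial : ℝ) ≠ 0 := by exact_mod_cast Nat.factorial_ne_zero k
  push_cast
  field_simp

lemma genBinom_trinomial (a : ℝ) {k K : ℕ} (h : k ≤ K) :
    genBinom a K * (K.choose k : ℝ) = genBinom a k * genBinom (a - k) (K - k) := by
  obtain ⟨d, rfl⟩ : ∃ d, K = k + d := ⟨K - k, (Nat.add_sub_cancel' h).symm⟩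
  rw [genBinom, genBinom, genBinom, Nat.add_sub_cancel_left]
  rw [Nat.cast_choose ℝ h, Nat.add_sub_cancel_left]
  have hsplit : ∏ i ∈ range (k + d), (a - i) =
      (∏ i ∈ range k, (a - i)) * ∏ i ∈ range d, (a - k - i) := by
    rw [prod_range_add]
    congr 1
    apply prod_congr rfl; intro i _; push_cast; ring
  rw [hsplit]
  have h1 : (k.factorial : ℝ) ≠ 0 := by exact_mod_cast Nat.factorial_ne_zero k
  have h2 : (d.factorial : ℝ) ≠ 0 := by exact_mod_cast Nat.factorial_ne_zero d
  have h4 : ((k + d).factorial : ℝ) ≠ 0 := by exact_mod_cast Nat.factorial_ne_zero _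
  field_simp

lemma genBinom_vandermonde (m : ℕ) (x y : ℝ) :
    ∑ k ∈ range (m + 1), genBinom x k * genBinom y (m - k) = genBinom (x + y) m := by
  induction m generalizing x y with
  | zero => simp [genBinom_zero]
  | succ m ih =>
    have key : ((m : ℝ) + 1) * ∑ k ∈ range (m + 2), genBinom x k * genBinom y (m + 1 - k)
        = ((m : ℝ) + 1) * genBinom (x + y) (m + 1) := by
      have split : ((m : ℝ) + 1) * ∑ k ∈ range (m + 2), genBinom x k * genBinom y (m + 1 - k)
          = (∑ k ∈ range (m + 2), (k : ℝ) * (genBinom x k * genBinom y (m + 1 - k)))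
            + ∑ k ∈ range (m + 2), ((m + 1 - k : ℕ) : ℝ) * (genBinom x k * genBinom y (m + 1 - k)) := by
        rw [Finset.mul_sum, ← Finset.sum_add_distrib]
        apply sum_congr rfl
        intro k hk
        have hk' : k ≤ m + 1 := by simpa [Nat.lt_succ_iff] using hk
        have : ((m + 1 - k : ℕ) : ℝ) = (m : ℝ) + 1 - k := by
          push_cast [Nat.cast_sub hk']; ring
        rw [this]; ring
      have h1 : ∑ k ∈ range (m + 2), (k : ℝ) * (genBinom x k * genBinom y (m + 1 - k))
          = x * genBinom (x - 1 + y) m := by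
        rw [Finset.sum_range_succ']
        simp only [Nat.cast_zero, zero_mul, add_zero]
        have : ∀ k ∈ range (m + 1), ((k + 1 : ℕ) : ℝ) * (genBinom x (k + 1) * genBinom y (m + 1 - (k + 1)))
            = x * (genBinom (x - 1) k * genBinom y (m - k)) := by
          intro k hk
          have : m + 1 - (k + 1) = m - k := by omega
          push_cast
          rw [show ((k:ℝ)+1) * (genBinom x (k+1) * genBinom y (m-k))
              = (((k:ℝ)+1) * genBinom x (k+1)) * genBinom y (m-k) by ring,
            genBinom_succ_left]
          ring
        rw [Finset.sum_congr rfl this, ← Finset.mul_sum, ih]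
      have h2 : ∑ k ∈ range (m + 2), ((m + 1 - k : ℕ) : ℝ) * (genBinom x k * genBinom y (m + 1 - k))
          = y * genBinom (x + (y - 1)) m := by
        rw [Finset.sum_range_succ]
        simp only [Nat.sub_self, Nat.cast_zero, zero_mul, add_zero]
        have : ∀ k ∈ range (m + 1), ((m + 1 - k : ℕ) : ℝ) * (genBinom x k * genBinom y (m + 1 - k))
            = y * (genBinom x k * genBinom (y - 1) (m - k)) := by
          intro k hk
          have hk' : k ≤ m := by simpa [Nat.lt_succ_iff] using hk
          have e1 : m + 1 - k = (m - k) + 1 := by omega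
          rw [e1]
          have e2 : (((m - k) + 1 : ℕ) : ℝ) = ((m - k : ℕ) : ℝ) + 1 := by push_cast; ring
          rw [e2, show (((m-k:ℕ):ℝ)+1) * (genBinom x k * genBinom y ((m-k)+1))
              = genBinom x k * ((((m-k:ℕ):ℝ)+1) * genBinom y ((m-k)+1)) by ring,
            genBinom_succ_left]
          ring
        rw [Finset.sum_congr rfl this, ← Finset.mul_sum]
        rw [show ∑ k ∈ range (m+1), genBinom x k * genBinom (y-1) (m-k) = genBinom (x + (y-1)) m from ih x (y-1)]
      rw [split, h1, h2]
      have e3 : x - 1 + y = x + y - 1 := by ring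
      have e4 : x + (y - 1) = x + y - 1 := by ring
      rw [e3, e4, genBinom_succ_left (x + y) m]
      ring
    have hm : ((m : ℝ) + 1) ≠ 0 := by positivity
    exact mul_left_cancel₀ hm key


noncomputable def Bc (α β : ℝ) (n m : ℕ) : ℝ :=
  genBinom ((n : ℝ) + α) (n - m) * genBinom ((n : ℝ) + β + (α + (m : ℝ))) m

lemma inner_eval (α β : ℝ) (n m : ℕ) (hm : m ≤ n) :
    ∑ k ∈ range (m + 1),
      genBinom ((n:ℝ) + α) (n - k) * genBinom ((n:ℝ) + β) k * (Nat.choose (n - k) (m - k) : ℝ)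
    = Bc α β n m := by
  have hc : ∀ k ∈ range (m + 1),
      genBinom ((n:ℝ) + α) (n - k) * genBinom ((n:ℝ) + β) k * (Nat.choose (n - k) (m - k) : ℝ)
      = genBinom ((n:ℝ) + α) (n - m) * (genBinom ((n:ℝ) + β) k * genBinom (α + (m:ℝ)) (m - k)) := by
    intro k hk
    have hkm : k ≤ m := by simpa [Nat.lt_succ_iff] using hk
    have h1 : m - k ≤ n - k := by omega
    have hsymm : (n - k).choose (m - k) = (n - k).choose (n - m) := by
      rw [← Nat.choose_symm h1]; congr 1; omega
    have h2 : n - m ≤ n - k := by omega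
    have htri := genBinom_trinomial ((n:ℝ) + α) h2
    have e1 : ((n:ℝ) + α) - ((n - m : ℕ) : ℝ) = α + (m : ℝ) := by
      rw [Nat.cast_sub hm]; ring
    have e2 : (n - k) - (n - m) = m - k := by omega
    rw [hsymm, show genBinom ((n:ℝ)+α) (n-k) * genBinom ((n:ℝ)+β) k * ((n-k).choose (n-m) : ℝ)
        = genBinom ((n:ℝ)+α) (n-k) * ((n-k).choose (n-m) : ℝ) * genBinom ((n:ℝ)+β) k by ring,
      htri, e1, e2]
    ring
  rw [sum_congr rfl hc, ← Finset.mul_sum, genBinom_vandermonde m ((n:ℝ) + β) (α + (m:ℝ))]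
  rfl

lemma jacobiP_expand (α β : ℝ) (n : ℕ) (x : ℝ) :
    jacobiP α β n x = ∑ m ∈ range (n + 1), Bc α β n m * ((x - 1) / 2) ^ m := by
  rw [jacobiP]
  have hxy : (x + 1) / 2 = (x - 1) / 2 + 1 := by ring
  calc ∑ k ∈ range (n + 1),
        genBinom (↑n + α) (n - k) * genBinom (↑n + β) k * ((x-1)/2) ^ k * ((x+1)/2) ^ (n - k)
      = ∑ k ∈ range (n + 1), ∑ j ∈ range (n - k + 1),
          genBinom (↑n + α) (n - k) * genBinom (↑n + β) k * (Nat.choose (n - k) j : ℝ)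
            * ((x-1)/2) ^ (k + j) := by
        apply sum_congr rfl; intro k hk
        rw [hxy, add_pow, Finset.mul_sum]
        apply sum_congr rfl; intro j hj
        rw [pow_add]; push_cast; ring
    _ = ∑ m ∈ range (n + 1), ∑ k ∈ range (m + 1),
          genBinom (↑n + α) (n - k) * genBinom (↑n + β) k * (Nat.choose (n - k) (m - k) : ℝ)
            * ((x-1)/2) ^ m := by
        rw [Finset.sum_sigma', Finset.sum_sigma']
        apply Finset.sum_nbij' (fun p => (⟨p.1 + p.2, p.1⟩ : Σ _ : ℕ, ℕ))
          (fun p => (⟨p.2, p.1 - p.2⟩ : Σ _ : ℕ, ℕ))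
        · intro a ha
          simp only [Finset.mem_sigma, Finset.mem_range] at ha ⊢
          omega
        · intro a ha
          simp only [Finset.mem_sigma, Finset.mem_range] at ha ⊢
          omega
        · intro a ha
          obtain ⟨p, q⟩ := a
          simp only [Finset.mem_sigma, Finset.mem_range] at ha
          rw [show p + q - p = q by omega]
        · intro a ha
          obtain ⟨p, q⟩ := a
          simp only [Finset.mem_sigma, Finset.mem_range] at ha
          rw [show q + (p - q) = p by omega]
        · intro a ha
          simp only [Finset.mem_sigma, Finset.mem_range] at ha
          have : (a.1 + a.2) - a.1 = a.2 := by omega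
          rw [this]
    _ = ∑ m ∈ range (n + 1), Bc α β n m * ((x - 1) / 2) ^ m := by
        apply sum_congr rfl; intro m hm
        rw [← Finset.sum_mul, inner_eval α β n m (by simpa [Nat.lt_succ_iff] using hm)]

lemma Bc_rec (α β : ℝ) (n m : ℕ) (hm : m < n) :
    ((m:ℝ) + 1) * ((m:ℝ) + α + 1) * Bc α β n (m+1)
      = ((n:ℝ) - m) * ((n:ℝ) + α + β + 1 + m) * Bc α β n m := by
  have hA := genBinom_succ_left ((n:ℝ) + β + (α + (((m:ℕ):ℝ) + 1))) m
  rw [show ((n:ℝ) + β + (α + ((m:ℝ) + 1))) - 1 = (n:ℝ) + β + (α + (m:ℝ)) by ring] at hA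
  have hB0 := genBinom_succ_right ((n:ℝ) + α) (n - (m+1))
  rw [show n - (m+1) + 1 = n - m by omega, Nat.cast_sub (by omega : m + 1 ≤ n)] at hB0
  have hB : ((n:ℝ) - (m:ℝ)) * genBinom ((n:ℝ)+α) (n-m)
      = ((m:ℝ) + α + 1) * genBinom ((n:ℝ)+α) (n-(m+1)) := by
    push_cast at hB0
    linear_combination hB0
  show ((m:ℝ) + 1) * ((m:ℝ) + α + 1) *
      (genBinom ((n:ℝ)+α) (n-(m+1)) * genBinom ((n:ℝ) + β + (α + ((m+1:ℕ):ℝ))) (m+1)) = _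
  rw [show (((m+1:ℕ)):ℝ) = (m:ℝ) + 1 by push_cast; ring]
  calc ((m:ℝ) + 1) * ((m:ℝ) + α + 1) *
        (genBinom ((n:ℝ)+α) (n-(m+1)) * genBinom ((n:ℝ) + β + (α + ((m:ℝ) + 1))) (m+1))
      = (((m:ℝ) + α + 1) * genBinom ((n:ℝ)+α) (n-(m+1))) *
        (((m:ℝ) + 1) * genBinom ((n:ℝ) + β + (α + ((m:ℝ) + 1))) (m+1)) := by ring
    _ = (((n:ℝ) - (m:ℝ)) * genBinom ((n:ℝ)+α) (n-m)) *
        (((n:ℝ) + β + (α + ((m:ℝ) + 1))) * genBinom ((n:ℝ) + β + (α + (m:ℝ))) m) := by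
        rw [hA, ← hB]
    _ = ((n:ℝ) - m) * ((n:ℝ) + α + β + 1 + m) * Bc α β n m := by
        rw [Bc]; ring

noncomputable def Gf (α β : ℝ) (n : ℕ) (t : ℝ) : ℝ :=
  ∑ m ∈ range (n+1), Bc α β n m * t ^ m
noncomputable def Gf1 (α β : ℝ) (n : ℕ) (t : ℝ) : ℝ :=
  ∑ m ∈ range (n+1), Bc α β n m * ((m:ℝ) * t ^ (m-1))
noncomputable def Gf2 (α β : ℝ) (n : ℕ) (t : ℝ) : ℝ :=
  ∑ m ∈ range (n+1), Bc α β n m * ((m:ℝ) * ((((m-1:ℕ)):ℝ) * t ^ (m-1-1)))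

lemma hasDerivAt_Gf (α β : ℝ) (n : ℕ) (t : ℝ) :
    HasDerivAt (Gf α β n) (Gf1 α β n t) t := by
  apply HasDerivAt.fun_sum
  intro m _
  exact (hasDerivAt_pow m t).const_mul _

lemma hasDerivAt_Gf1 (α β : ℝ) (n : ℕ) (t : ℝ) :
    HasDerivAt (Gf1 α β n) (Gf2 α β n t) t := by
  apply HasDerivAt.fun_sum
  intro m _
  exact ((hasDerivAt_pow (m-1) t).const_mul ((m:ℝ))).const_mul _

lemma pow_pred_mul (m : ℕ) (t : ℝ) : (m:ℝ) * t ^ (m-1) * t = (m:ℝ) * t ^ m := by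
  cases m with
  | zero => simp
  | succ m => simp [pow_succ]; ring

lemma pow_pred2_mul (m : ℕ) (t : ℝ) :
    (m:ℝ) * ((((m-1:ℕ)):ℝ) * t ^ (m-1-1)) * t^2 = (m:ℝ) * ((m:ℝ) - 1) * t ^ m := by
  match m with
  | 0 => simp
  | 1 => simp
  | (m+2) =>
    rw [show m+2-1-1 = m by omega, show m+2-1 = m+1 by omega]
    rw [show (↑(m+2) : ℝ) * (↑(m+1) * t ^ m) * t^2 = (↑(m+2):ℝ) * ↑(m+1) * (t^m * t^2) by ring,
      show t^m * t^2 = t^(m+2) from by rw [← pow_add]]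
    push_cast
    ring

lemma pow_pred1_mul (m : ℕ) (t : ℝ) :
    (m:ℝ) * ((((m-1:ℕ)):ℝ) * t ^ (m-1-1)) * t = (m:ℝ) * (((m-1:ℕ)):ℝ) * t ^ (m-1) := by
  match m with
  | 0 => simp
  | (m+1) =>
    rw [show m+1-1 = m by omega]
    calc (↑(m+1):ℝ) * ((m:ℝ) * t^(m-1)) * t = ((m:ℝ)+1) * ((m:ℝ) * t^(m-1) * t) := by push_cast; ring
      _ = ((m:ℝ)+1) * ((m:ℝ) * t^m) := by rw [pow_pred_mul]
      _ = _ := by push_cast; ring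

lemma Gf_ode (α β : ℝ) (n : ℕ) (t : ℝ) :
    t * (1 + t) * Gf2 α β n t + ((α + 1) + (α + β + 2) * t) * Gf1 α β n t
      = (n:ℝ) * ((n:ℝ) + α + β + 1) * Gf α β n t := by
  have hC1 : t * Gf2 α β n t + (α + 1) * Gf1 α β n t
      = ∑ m ∈ range n, ((n:ℝ) - m) * ((n:ℝ) + α + β + 1 + m) * Bc α β n m * t ^ m := by
    have step1 : t * Gf2 α β n t + (α + 1) * Gf1 α β n t
        = ∑ m ∈ range (n+1), Bc α β n m * ((m:ℝ) * ((((m-1:ℕ)):ℝ) + (α+1)) * t ^ (m-1)) := by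
      unfold Gf1 Gf2
      rw [Finset.mul_sum, Finset.mul_sum, ← Finset.sum_add_distrib]
      apply sum_congr rfl; intro m _
      linear_combination (Bc α β n m) * pow_pred1_mul m t
    rw [step1, Finset.sum_range_succ']
    simp only [Nat.cast_zero, zero_mul, mul_zero, add_zero]
    apply sum_congr rfl; intro m hm
    rw [show m + 1 - 1 = m by omega]
    have := Bc_rec α β n m (mem_range.mp hm)
    push_cast
    linear_combination (t ^ m) * this
  have hC2 : (n:ℝ) * ((n:ℝ) + α + β + 1) * Gf α β n t
        - (t^2 * Gf2 α β n t + (α + β + 2) * (t * Gf1 α β n t))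
      = ∑ m ∈ range n, ((n:ℝ) - m) * ((n:ℝ) + α + β + 1 + m) * Bc α β n m * t ^ m := by
    have step1 : (n:ℝ) * ((n:ℝ) + α + β + 1) * Gf α β n t
        - (t^2 * Gf2 α β n t + (α + β + 2) * (t * Gf1 α β n t))
        = ∑ m ∈ range (n+1), ((n:ℝ) - m) * ((n:ℝ) + α + β + 1 + m) * Bc α β n m * t ^ m := by
      unfold Gf Gf1 Gf2
      rw [Finset.mul_sum, Finset.mul_sum, Finset.mul_sum, Finset.mul_sum,
        ← Finset.sum_add_distrib, ← Finset.sum_sub_distrib]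
      apply sum_congr rfl; intro m _
      linear_combination (-(Bc α β n m)) * pow_pred2_mul m t
        - (α + β + 2) * (Bc α β n m) * pow_pred_mul m t
    rw [step1, Finset.sum_range_succ]
    simp
  linear_combination hC1 - hC2

lemma Gf_zero (α β : ℝ) (n : ℕ) : Gf α β n 0 = genBinom ((n:ℝ) + α) n := by
  rw [Gf, Finset.sum_eq_single 0]
  · simp [Bc, genBinom_zero]
  · intro m _ hm
    rw [zero_pow hm, mul_zero]
  · intro h; exact absurd (mem_range.mpr (by omega)) h

lemma jacobiP_one (α β : ℝ) (n : ℕ) : jacobiP α β n 1 = genBinom ((n:ℝ) + α) n := by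
  rw [jacobiP, Finset.sum_eq_single 0]
  · simp [genBinom_zero]
  · intro m _ hm
    have : ((1:ℝ) - 1) / 2 = 0 := by norm_num
    rw [this, zero_pow hm]
    ring
  · intro h; exact absurd (mem_range.mpr (by omega)) h

lemma jacobiP_neg_one (α β : ℝ) (n : ℕ) :
    jacobiP α β n (-1) = (-1 : ℝ) ^ n * genBinom ((n:ℝ) + β) n := by
  rw [jacobiP, Finset.sum_eq_single n]
  · have h0 : n - n = 0 := by omega
    rw [h0, genBinom_zero]
    norm_num
    ring
  · intro m hm hmn
    have hmlt := mem_range.mp hm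
    rw [show ((-1:ℝ) + 1) / 2 = 0 by norm_num, zero_pow (by omega : n - m ≠ 0)]
    ring
  · intro h; exact absurd (mem_range.mpr (by omega)) h

lemma Gf_neg_one (α β : ℝ) (n : ℕ) :
    (Gf α β n (-1)) ^ 2 = (genBinom ((n:ℝ) + β) n) ^ 2 := by
  have h1 : Gf α β n (-1) = jacobiP α β n (-1) := by
    rw [jacobiP_expand]
    rw [show ((-1:ℝ) - 1) / 2 = -1 by norm_num]
    rfl
  rw [h1, jacobiP_neg_one, mul_pow, ← pow_mul, mul_comm n 2, pow_mul]
  norm_num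

lemma genBinom_bound (γ : ℝ) (hγ : -(1/2 : ℝ) ≤ γ) (n : ℕ) (hn : 1 ≤ n) :
    0 ≤ genBinom ((n:ℝ) + γ) n ∧ genBinom ((n:ℝ) + γ) n ≤ Real.exp |γ| * (n:ℝ) ^ γ := by
  have hn0 : (0:ℝ) < n := by exact_mod_cast hn
  have hprod : genBinom ((n:ℝ) + γ) n = ∏ j ∈ range n, (1 + γ / ((j:ℝ) + 1)) := by
    rw [genBinom]
    have h1 : ∏ i ∈ range n, ((n:ℝ) + γ - i) = ∏ j ∈ range n, (γ + ((j:ℝ) + 1)) := by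
      rw [← Finset.prod_range_reflect]
      apply prod_congr rfl; intro j hj
      have hjn : j < n := mem_range.mp hj
      rw [Nat.cast_sub (by omega : j ≤ n - 1), Nat.cast_sub (by omega : 1 ≤ n)]
      push_cast
      ring
    have h2 : ((Nat.factorial n : ℕ) : ℝ) = ∏ j ∈ range n, ((j:ℝ) + 1) := by
      rw [← Finset.prod_range_add_one_eq_factorial]
      push_cast
      rfl
    rw [h1, h2, ← Finset.prod_div_distrib]
    apply prod_congr rfl; intro j _
    have : ((j:ℝ) + 1) ≠ 0 := by positivity
    field_simp
    ring
  have hfac_pos : ∀ j ∈ range n, (0:ℝ) ≤ 1 + γ / ((j:ℝ) + 1) := by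
    intro j _
    have h1 : (0:ℝ) < (j:ℝ) + 1 := by positivity
    have h2 : -(1/2 : ℝ) ≤ γ / ((j:ℝ) + 1) := by
      rw [le_div_iff₀ h1]
      nlinarith [(Nat.cast_nonneg j : (0:ℝ) ≤ j)]
    linarith
  constructor
  · rw [hprod]; exact prod_nonneg hfac_pos
  · rw [hprod]
    have hH : (∏ j ∈ range n, (1 + γ / ((j:ℝ) + 1)))
        ≤ Real.exp (γ * ∑ j ∈ range n, 1 / ((j:ℝ) + 1)) := by
      rw [Finset.mul_sum, Real.exp_sum]
      apply prod_le_prod hfac_pos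
      intro j _
      have := Real.add_one_le_exp (γ * (1 / ((j:ℝ)+1)))
      calc 1 + γ / ((j:ℝ)+1) = γ * (1 / ((j:ℝ)+1)) + 1 := by ring
        _ ≤ Real.exp (γ * (1 / ((j:ℝ)+1))) := this
    refine hH.trans ?_
    have hHe : ∑ j ∈ range n, 1 / ((j:ℝ) + 1) = ((harmonic n : ℚ) : ℝ) := by
      rw [harmonic]
      push_cast
      apply sum_congr rfl
      intro j _
      rw [one_div]
    rw [hHe]
    rcases le_or_gt 0 γ with hg | hg
    · have h1 : ((harmonic n : ℚ) : ℝ) ≤ 1 + Real.log n := harmonic_le_one_add_log n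
      calc Real.exp (γ * ((harmonic n : ℚ) : ℝ)) ≤ Real.exp (γ * (1 + Real.log n)) := by
            apply Real.exp_le_exp.mpr
            exact mul_le_mul_of_nonneg_left h1 hg
        _ = Real.exp γ * (n:ℝ) ^ γ := by
            rw [Real.rpow_def_of_pos hn0, mul_add, Real.exp_add, mul_one]
            ring_nf
        _ ≤ Real.exp |γ| * (n:ℝ) ^ γ := by
            have : Real.exp γ ≤ Real.exp |γ| := Real.exp_le_exp.mpr (le_abs_self γ)
            have hp : (0:ℝ) ≤ (n:ℝ) ^ γ := (Real.rpow_pos_of_pos hn0 γ).le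
            exact mul_le_mul_of_nonneg_right this hp
    · have h1 : Real.log n ≤ ((harmonic n : ℚ) : ℝ) := by
        obtain ⟨m, rfl⟩ : ∃ m, n = m + 1 := ⟨n - 1, by omega⟩
        calc Real.log (m+1 : ℕ) ≤ ((harmonic m : ℚ) : ℝ) := by
              exact_mod_cast log_add_one_le_harmonic m
          _ ≤ ((harmonic (m+1) : ℚ) : ℝ) := by
              have : harmonic m ≤ harmonic (m+1) := by
                rw [harmonic_succ]
                have : (0:ℚ) ≤ (↑(m+1))⁻¹ := by positivity
                linarith
              exact_mod_cast this
      calc Real.exp (γ * ((harmonic n : ℚ) : ℝ)) ≤ Real.exp (γ * Real.log n) := by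
            apply Real.exp_le_exp.mpr
            exact mul_le_mul_of_nonpos_left h1 hg.le
        _ = (n:ℝ) ^ γ := by rw [Real.rpow_def_of_pos hn0]; ring_nf
        _ ≤ Real.exp |γ| * (n:ℝ) ^ γ := by
            have h2 : (1:ℝ) ≤ Real.exp |γ| := by
              rw [Real.one_le_exp_iff]
              exact abs_nonneg γ
            nlinarith [(Real.rpow_pos_of_pos hn0 γ).le]

lemma Ef_hasDeriv (α β : ℝ) (n : ℕ) (hK : ((n:ℝ) * ((n:ℝ) + α + β + 1)) ≠ 0) (x : ℝ) :
    HasDerivAt (fun x : ℝ => (Gf α β n ((x-1)/2))^2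
        + (1 - x^2) * ((1/2) * Gf1 α β n ((x-1)/2))^2 / ((n:ℝ) * ((n:ℝ) + α + β + 1)))
      (2 * ((1/2) * Gf1 α β n ((x-1)/2))^2 * ((α+β+1)*x + (α-β))
        / ((n:ℝ) * ((n:ℝ) + α + β + 1))) x := by
  have hu : HasDerivAt (fun x : ℝ => (x - 1)/2) (1/2 : ℝ) x := by
    simpa using ((hasDerivAt_id x).sub_const 1).div_const 2
  have h0 : HasDerivAt (fun x : ℝ => Gf α β n ((x-1)/2)) (Gf1 α β n ((x-1)/2) * (1/2)) x :=
    by have := (hasDerivAt_Gf α β n ((x-1)/2)).comp x hu; exact this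
  have h1 : HasDerivAt (fun x : ℝ => Gf1 α β n ((x-1)/2)) (Gf2 α β n ((x-1)/2) * (1/2)) x :=
    by have := (hasDerivAt_Gf1 α β n ((x-1)/2)).comp x hu; exact this
  have hw : HasDerivAt (fun x : ℝ => 1 - x^2) (-((2:ℕ) * x ^ (2-1))) x :=
    (hasDerivAt_pow 2 x).const_sub 1
  have htot := (h0.pow 2).add ((hw.mul ((h1.const_mul (1/2 : ℝ)).pow 2)).div_const
    ((n:ℝ) * ((n:ℝ) + α + β + 1)))
  convert htot using 1
  · rfl
  · rfl
  · rfl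
  have hode := Gf_ode α β n ((x-1)/2)
  push_cast
  simp only [Pi.pow_apply]
  field_simp
  rw [div_eq_iff hK, mul_assoc (Gf1 α β n ((x-1)/2)), add_mul, div_mul_cancel₀ _ hK]
  linear_combination (4 * Gf1 α β n ((x-1)/2)) * hode


set_option maxHeartbeats 1000000 in
/-- For Jacobi polynomials with `α, β ≥ -1/2` there is a constant `C = C(α,β)` with
`sup_{y∈(-1,1)} √(1-y²) |(P_n^{(α,β)})'(y)| ≤ C n^{1+q}`, `q = max{α,β}`, for `n ≥ 1`. -/
theorem stmt12 (α β : ℝ) (hα : -(1 / 2 : ℝ) ≤ α) (hβ : -(1 / 2 : ℝ) ≤ β) :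
    ∃ C > 0, ∀ n : ℕ, 1 ≤ n → ∀ y ∈ Set.Ioo (-1 : ℝ) 1,
      Real.sqrt (1 - y ^ 2) * |deriv (jacobiP α β n) y| ≤ C * (n : ℝ) ^ (1 + max α β) := by
  have hs2 : (0:ℝ) < α + β + 2 := by linarith
  have hs1 : (0:ℝ) ≤ α + β + 1 := by linarith
  refine ⟨Real.sqrt (α+β+2) * Real.exp (|α| + |β|),
    mul_pos (Real.sqrt_pos.mpr hs2) (Real.exp_pos _), ?_⟩
  intro n hn z hz
  obtain ⟨hz1, hz2⟩ := hz
  set q := max α β with hq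
  have hn0 : (0:ℝ) < n := by exact_mod_cast hn
  have hn1 : (1:ℝ) ≤ n := by exact_mod_cast hn
  have hKpos : (0:ℝ) < (n:ℝ) * ((n:ℝ) + α + β + 1) := by nlinarith
  have hKne : ((n:ℝ) * ((n:ℝ) + α + β + 1)) ≠ 0 := hKpos.ne'
  set E : ℝ → ℝ := fun x => (Gf α β n ((x-1)/2))^2
      + (1 - x^2) * ((1/2) * Gf1 α β n ((x-1)/2))^2 / ((n:ℝ) * ((n:ℝ) + α + β + 1)) with hE
  have hEd : ∀ x, HasDerivAt E
      (2 * ((1/2) * Gf1 α β n ((x-1)/2))^2 * ((α+β+1)*x + (α-β)) / ((n:ℝ) * ((n:ℝ) + α + β + 1))) x :=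
    fun x => Ef_hasDeriv α β n hKne x
  have hEdiff : Differentiable ℝ E := fun x => (hEd x).differentiableAt
  have hEderiv : ∀ x, deriv E x
      = 2 * ((1/2) * Gf1 α β n ((x-1)/2))^2 * ((α+β+1)*x + (α-β)) / ((n:ℝ) * ((n:ℝ) + α + β + 1)) :=
    fun x => (hEd x).deriv
  have hEmax : E z ≤ max (E (-1)) (E 1) := by
    rcases le_or_gt ((α+β+1)*z + (α-β)) 0 with hc | hc
    · have hanti : AntitoneOn E (Set.Icc (-1) z) := by
        apply antitoneOn_of_deriv_nonpos (convex_Icc _ _) hEdiff.continuous.continuousOn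
          hEdiff.differentiableOn
        intro x hx
        rw [interior_Icc] at hx
        rw [hEderiv]
        apply div_nonpos_of_nonpos_of_nonneg _ hKpos.le
        have hsq : (0:ℝ) ≤ 2 * ((1/2) * Gf1 α β n ((x-1)/2))^2 := by positivity
        have hle : (α+β+1)*x + (α-β) ≤ (α+β+1)*z + (α-β) := by nlinarith [hx.2.le]
        nlinarith
      exact le_max_of_le_left (hanti ⟨le_refl _, hz1.le⟩ ⟨hz1.le, le_refl _⟩ hz1.le)
    · have hmono : MonotoneOn E (Set.Icc z 1) := by
        apply monotoneOn_of_deriv_nonneg (convex_Icc _ _) hEdiff.continuous.continuousOn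
          hEdiff.differentiableOn
        intro x hx
        rw [interior_Icc] at hx
        rw [hEderiv]
        apply div_nonneg _ hKpos.le
        have hsq : (0:ℝ) ≤ 2 * ((1/2) * Gf1 α β n ((x-1)/2))^2 := by positivity
        have hle : (α+β+1)*z + (α-β) ≤ (α+β+1)*x + (α-β) := by nlinarith [hx.1.le]
        nlinarith
      exact le_max_of_le_right (hmono ⟨le_refl _, hz2.le⟩ ⟨hz2.le, le_refl _⟩ hz2.le)
  have hgb_a := genBinom_bound α hα n hn
  have hgb_b := genBinom_bound β hβ n hn
  have hE1 : E 1 = (genBinom ((n:ℝ)+α) n)^2 := by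
    simp only [hE]
    rw [show ((1:ℝ)-1)/2 = 0 by norm_num, Gf_zero]
    norm_num
  have hEm1 : E (-1) = (genBinom ((n:ℝ)+β) n)^2 := by
    simp only [hE]
    rw [show ((-1:ℝ)-1)/2 = -1 by norm_num, Gf_neg_one]
    norm_num
  set M := Real.exp (|α| + |β|) * (n:ℝ) ^ q with hM
  have hMpos : 0 < M := by positivity
  have hmax_le : max (E (-1)) (E 1) ≤ M^2 := by
    have hbound : ∀ γ : ℝ, -(1/2:ℝ) ≤ γ → γ ≤ q → |γ| ≤ |α| + |β| →
        (genBinom ((n:ℝ)+γ) n)^2 ≤ M^2 := by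
      intro γ h1 h2 h3
      have hb := genBinom_bound γ h1 n hn
      have hle : genBinom ((n:ℝ)+γ) n ≤ M := by
        refine hb.2.trans ?_
        rw [hM]
        apply mul_le_mul (Real.exp_le_exp.mpr h3)
          (Real.rpow_le_rpow_of_exponent_le hn1 h2)
          (Real.rpow_pos_of_pos hn0 γ).le (Real.exp_pos _).le
      exact pow_le_pow_left₀ hb.1 hle 2
    apply max_le
    · rw [hEm1]
      exact hbound β hβ (le_max_right _ _) (by cases abs_cases α <;> cases abs_cases β <;> linarith)
    · rw [hE1]
      exact hbound α hα (le_max_left _ _) (by cases abs_cases α <;> cases abs_cases β <;> linarith)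
  have hderiv : deriv (jacobiP α β n) z = (1/2) * Gf1 α β n ((z-1)/2) := by
    have hu : HasDerivAt (fun x : ℝ => (x - 1)/2) (1/2 : ℝ) z := by
      simpa using ((hasDerivAt_id z).sub_const 1).div_const 2
    have h0 : HasDerivAt (fun x : ℝ => Gf α β n ((x-1)/2)) (Gf1 α β n ((z-1)/2) * (1/2)) z :=
      by have := (hasDerivAt_Gf α β n ((z-1)/2)).comp z hu; exact this
    have hfun : jacobiP α β n = fun x => Gf α β n ((x-1)/2) :=
      funext (fun x => jacobiP_expand α β n x)
    rw [hfun, h0.deriv]; ring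
  set D := (1/2) * Gf1 α β n ((z-1)/2) with hD
  have hzsq : (0:ℝ) ≤ 1 - z^2 := by nlinarith
  have hkey : (1 - z^2) * D^2 / ((n:ℝ) * ((n:ℝ) + α + β + 1)) ≤ M^2 := by
    have h1 : (1 - z^2) * D^2 / ((n:ℝ) * ((n:ℝ) + α + β + 1)) ≤ E z := by
      have h2 : (0:ℝ) ≤ (Gf α β n ((z-1)/2))^2 := sq_nonneg _
      simp only [hE]
      linarith
    exact h1.trans (hEmax.trans hmax_le)
  have h2 : (1 - z^2) * D^2 ≤ ((n:ℝ) * ((n:ℝ) + α + β + 1)) * M^2 := by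
    rw [div_le_iff₀ hKpos] at hkey; linarith
  have hKle : (n:ℝ) * ((n:ℝ) + α + β + 1) ≤ (α+β+2) * (n:ℝ)^2 := by
    nlinarith [mul_nonneg (mul_nonneg hn0.le (sub_nonneg.mpr hn1)) hs1]
  calc Real.sqrt (1 - z^2) * |deriv (jacobiP α β n) z|
      = Real.sqrt (1 - z^2) * Real.sqrt (D^2) := by rw [hderiv, Real.sqrt_sq_eq_abs]
    _ = Real.sqrt ((1 - z^2) * D^2) := (Real.sqrt_mul hzsq _).symm
    _ ≤ Real.sqrt (((n:ℝ) * ((n:ℝ) + α + β + 1)) * M^2) := Real.sqrt_le_sqrt h2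
    _ ≤ Real.sqrt ((α+β+2) * ((n:ℝ) * M)^2) := by
        apply Real.sqrt_le_sqrt
        have := mul_le_mul_of_nonneg_right hKle (sq_nonneg M)
        nlinarith
    _ = Real.sqrt (α+β+2) * ((n:ℝ) * M) := by
        rw [Real.sqrt_mul hs2.le, Real.sqrt_sq (by positivity)]
    _ = Real.sqrt (α+β+2) * Real.exp (|α| + |β|) * (n:ℝ) ^ (1 + q) := by
        rw [hM, Real.rpow_add hn0, Real.rpow_one]; ring
end
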